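/- Let θ be an automorphism of a finite ring R of finite order, and let C be a θ-skew cyclic code of length n over R (invariant under the skew cyclic shift σ_θ(c₀,…,c_{n−1}) = (θ(c_{n−1}),θ(c₀),…,θ(c_{n−2}))). Set r = gcd(n, ord(θ)). If r = 1 then C is a (classical) cyclic code of length n over R; if r > 1, writing n = m·r, C is a quasi-cyclic code of index m, i.e., C is invariant under the shift by r positions (θ-free quasi-cyclic shift on blocks of length r). -/

import Mathlib

/-- Let `θ` be an automorphism of a finite ring `R` and `C` a `θ`-skew cyclic code of
length `n` over `R`, with `r = gcd(n, ord θ)` and `n = m·r`.  If `r = 1` then `C` is a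
cyclic code; if `r > 1` then `C` is a quasi-cyclic code of index `m`, i.e. invariant
under the shift by `r` positions. -/
theorem skew_cyclic_is_quasicyclic {R : Type} [Ring R] [Fintype R]
    (θ : RingAut R) {n m r : ℕ} [NeZero n]
    (hr : r = Nat.gcd n (orderOf θ)) (hnm : n = m * r)
    (C : Submodule R (Fin n → R))
    (hC : ∀ c ∈ C, (fun i => θ (c (i - 1))) ∈ C) :
    (r = 1 → ∀ c ∈ C, (fun i => c (i - 1)) ∈ C) ∧
    (1 < r → ∀ c ∈ C, (fun i : Fin n => c (i - Fin.ofNat n r)) ∈ C) := by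
  have hfin : Finite (RingAut R) :=
    Finite.of_injective (fun f => (f : R ≃ R)) (fun f g h => by
      ext x
      exact congrArg (fun e : R ≃ R => e x) h)
  set d := orderOf θ with hd
  have hdpos : 0 < d := orderOf_pos θ
  have hnpos : 0 < n := Nat.pos_of_ne_zero (NeZero.ne n)
  -- iterating the skew shift `k` times
  open Fin.NatCast in
  have key : ∀ k : ℕ, ∀ c ∈ C, (fun i : Fin n => (θ ^ k) (c (i - (k : Fin n)))) ∈ C := by
    intro k
    induction k with
    | zero => intro c hc; simpa using hc
    | succ k ih =>
      intro c hc
      have h2 := hC _ (ih c hc)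
      have heq : (fun i : Fin n => (θ ^ (k + 1)) (c (i - ((k + 1 : ℕ) : Fin n)))) =
          (fun i : Fin n => θ ((fun j : Fin n => (θ ^ k) (c (j - (k : Fin n)))) (i - 1))) := by
        funext i
        have harg : i - ((k + 1 : ℕ) : Fin n) = i - 1 - (k : Fin n) := by
          push_cast
          abel
        rw [pow_succ']
        rw [harg]; rfl
      rw [heq]
      exact h2
  -- the main shift by `r` statement
  open Fin.NatCast in
  have main : ∀ c ∈ C, (fun i : Fin n => c (i - (r : Fin n))) ∈ C := by
    intro c hc
    -- construct k with d ∣ k and k ≡ r [MOD n]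
    set A := Nat.gcdA n d with hA
    set B := Nat.gcdB n d with hB
    have hbez : (r : ℤ) = n * A + d * B := by
      rw [hr]; exact_mod_cast Nat.gcd_eq_gcd_ab n d
    set y : ℤ := B + B.natAbs * n with hy
    have hy0 : 0 ≤ y := by
      have h1 : (1 : ℤ) ≤ n := by exact_mod_cast hnpos
      have h2 : -B ≤ (B.natAbs : ℤ) := by
        have := Int.le_natAbs (a := -B)
        simpa [Int.natAbs_neg] using this
      have h3 : (0 : ℤ) ≤ (B.natAbs : ℤ) := Int.natCast_nonneg _
      nlinarith
    set k : ℕ := ((d : ℤ) * y).toNat with hk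
    have hkz : (k : ℤ) = (d : ℤ) * y :=
      Int.toNat_of_nonneg (mul_nonneg (Int.natCast_nonneg _) hy0)
    have hdk : d ∣ k := by
      have : (d : ℤ) ∣ (k : ℤ) := ⟨y, hkz⟩
      exact_mod_cast this
    have hdy : (d : ℤ) * y = r + ((d * B.natAbs - A) * n) := by
      rw [hy]; linear_combination -hbez
    have hZ : ((k : ℕ) : ZMod n) = (r : ZMod n) := by
      have h0 : ((n : ℕ) : ZMod n) = 0 := ZMod.natCast_self n
      have : ((k : ℤ) : ZMod n) = ((r : ℤ) : ZMod n) := by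
        rw [hkz, hdy]
        push_cast
        rw [h0]
        ring
      have h1 : ((k : ℤ) : ZMod n) = ((k : ℕ) : ZMod n) := by push_cast; ring
      have h2 : ((r : ℤ) : ZMod n) = ((r : ℕ) : ZMod n) := by push_cast; ring
      rw [h1, h2] at this
      exact this
    have hkr : k ≡ r [MOD n] := (ZMod.natCast_eq_natCast_iff _ _ _).mp hZ
    have hθ : θ ^ k = 1 := orderOf_dvd_iff_pow_eq_one.mp (hd ▸ hdk)
    have hcast : (k : Fin n) = (r : Fin n) := by
      apply Fin.ext
      rw [Fin.coe_natCast_eq_mod, Fin.coe_natCast_eq_mod]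
      exact hkr
    have h1 := key k c hc
    rw [hθ, hcast] at h1
    simpa using h1
  refine ⟨fun hr1 => ?_, fun _ => main⟩
  intro c hc
  have := main c hc
  simpa [hr1] using this
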